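/- A permutation φ of {1,…,11} is an automorphism of the combinatorics K if and only if φ ∈ {id, σ, σ², σ³}, where σ = (1 3 2 4)(5 6)(7 9 10 8). Consequently the automorphism group of K is cyclic of order 4, generated by σ. -/

import Mathlib

open Finset

/-- The point set `P` of the combinatorics `K` on the line set `{1,…,11}`. -/
def Kpoints : Finset (Finset ℕ) :=
  { {1,2}, {1,3,5,7}, {1,4,6,8}, {1,9}, {1,10,11}, {2,3,6,9}, {2,4,5,10},
    {2,7,11}, {2,8}, {3,4}, {3,8,11}, {3,10}, {4,7}, {4,9,11}, {5,6},
    {5,8,9}, {5,11}, {6,7,10}, {6,11}, {7,8}, {7,9}, {8,10}, {9,10} }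

/-- An automorphism of `K`: a permutation of `{1,…,11}` (viewed as a permutation of `ℕ`
fixing everything outside `{1,…,11}`) sending every member of `P` to a member of `P`. -/
def IsAutoK (φ : Equiv.Perm ℕ) : Prop :=
  (∀ n : ℕ, n ∉ Finset.Icc 1 11 → φ n = n) ∧
  ∀ S ∈ Kpoints, S.image φ ∈ Kpoints

/-- The permutation `σ = (1 3 2 4)(5 6)(7 9 10 8)`. -/
def sigmaK : Equiv.Perm ℕ :=
  ([1,3,2,4] : List ℕ).formPerm * ([5,6] : List ℕ).formPerm *
    ([7,9,10,8] : List ℕ).formPerm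

/-- degree of a line, counting only points of cardinality `k` -/
def degkK (k l : ℕ) : ℕ := (Kpoints.filter (fun S => l ∈ S ∧ S.card = k)).card

lemma sig_fix (n : ℕ) (hn : n ∉ Finset.Icc 1 11) : sigmaK n = n := by
  have h : n = 0 ∨ 12 ≤ n := by
    simp only [Finset.mem_Icc, not_and, not_le] at hn; omega
  have h1 : ([1,3,2,4] : List ℕ).formPerm n = n :=
    List.formPerm_apply_of_notMem (by simp; omega)
  have h2 : ([5,6] : List ℕ).formPerm n = n :=
    List.formPerm_apply_of_notMem (by simp; omega)
  have h3 : ([7,9,10,8] : List ℕ).formPerm n = n :=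
    List.formPerm_apply_of_notMem (by simp; omega)
  have e : sigmaK n = ([1,3,2,4] : List ℕ).formPerm (([5,6] : List ℕ).formPerm
      (([7,9,10,8] : List ℕ).formPerm n)) := rfl
  rw [e, h3, h2, h1]

lemma sigpow_fix (k : ℕ) (n : ℕ) (hn : n ∉ Finset.Icc 1 11) : (sigmaK ^ k) n = n := by
  induction k with
  | zero => simp
  | succ m ih =>
    rw [pow_succ, Equiv.Perm.mul_apply, sig_fix n hn, ih]

lemma eq_of_vals {φ ψ : Equiv.Perm ℕ}
    (hφ : ∀ n : ℕ, n ∉ Finset.Icc 1 11 → φ n = n)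
    (hψ : ∀ n : ℕ, n ∉ Finset.Icc 1 11 → ψ n = n)
    (h : ∀ n ∈ Finset.Icc 1 11, φ n = ψ n) : φ = ψ :=
  Equiv.ext fun n => by
    by_cases hn : n ∈ Finset.Icc 1 11
    · exact h n hn
    · exact (hφ n hn).trans (hψ n hn).symm

lemma auto_symm_mem {φ : Equiv.Perm ℕ} (h : IsAutoK φ) :
    ∀ T ∈ Kpoints, T.image ⇑φ.symm ∈ Kpoints := by
  have himg : Kpoints.image (fun S => S.image ⇑φ) = Kpoints := by
    apply Finset.eq_of_subset_of_card_le
    · intro T hT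
      simp only [Finset.mem_image] at hT
      obtain ⟨S, hS, rfl⟩ := hT
      exact h.2 S hS
    · rw [Finset.card_image_of_injOn
        (fun S _ T _ hST => Finset.image_injective φ.injective hST)]
  intro T hT
  rw [← himg] at hT
  simp only [Finset.mem_image] at hT
  obtain ⟨S, hS, rfl⟩ := hT
  have : (S.image ⇑φ).image ⇑φ.symm = S := by
    rw [Finset.image_image]
    simp
  rw [this]
  exact hS

lemma auto_degk {φ : Equiv.Perm ℕ} (h : IsAutoK φ) (k l : ℕ) :
    degkK k (φ l) = degkK k l := by
  unfold degkK
  refine Finset.card_bij' (fun T _ => T.image ⇑φ.symm) (fun S _ => S.image ⇑φ) ?_ ?_ ?_ ?_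
  · intro T hT
    simp only [Finset.mem_filter] at hT ⊢
    refine ⟨auto_symm_mem h T hT.1, ?_, ?_⟩
    · have := Finset.mem_image_of_mem ⇑φ.symm hT.2.1
      simpa using this
    · rw [Finset.card_image_of_injective _ φ.symm.injective]; exact hT.2.2
  · intro S hS
    simp only [Finset.mem_filter] at hS ⊢
    refine ⟨h.2 S hS.1, Finset.mem_image_of_mem _ hS.2.1, ?_⟩
    rw [Finset.card_image_of_injective _ φ.injective]; exact hS.2.2
  · intro T hT
    rw [Finset.image_image]; simp
  · intro S hS
    rw [Finset.image_image]; simp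

lemma classK11 : ∀ m ∈ Finset.Icc 1 11, degkK 2 m = 2 → degkK 3 m = 4 → m = 11 := by decide
lemma classK16 : ∀ m ∈ Finset.Icc 1 11, degkK 2 m = 2 → degkK 3 m = 1 → m ∈ ([1,2,3,4,5,6] : List ℕ) := by decide
lemma classK710 : ∀ m ∈ Finset.Icc 1 11, degkK 2 m = 3 → m ∈ ([7,8,9,10] : List ℕ) := by decide

set_option synthInstance.maxSize 20000 in
set_option synthInstance.maxHeartbeats 1000000 in
set_option maxHeartbeats 1000000 in
theorem keyK : ∀ a1 ∈ ([1,2,3,4,5,6] : List ℕ), ∀ a2 ∈ ([1,2,3,4,5,6] : List ℕ),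
    ({a1,a2} : Finset ℕ) ∈ Kpoints →
    ∀ a3 ∈ ([1,2,3,4,5,6] : List ℕ), ∀ a4 ∈ ([1,2,3,4,5,6] : List ℕ),
    ({a3,a4} : Finset ℕ) ∈ Kpoints →
    ∀ a5 ∈ ([1,2,3,4,5,6] : List ℕ), ∀ a6 ∈ ([1,2,3,4,5,6] : List ℕ),
    ({a5,a6} : Finset ℕ) ∈ Kpoints →
    ∀ a7 ∈ ([7,8,9,10] : List ℕ), ∀ a8 ∈ ([7,8,9,10] : List ℕ),
    ({a7,a8} : Finset ℕ) ∈ Kpoints →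
    ∀ a9 ∈ ([7,8,9,10] : List ℕ),
    ({a7,a9} : Finset ℕ) ∈ Kpoints → ({a1,a9} : Finset ℕ) ∈ Kpoints →
    ∀ a10 ∈ ([7,8,9,10] : List ℕ),
    ({a3,a10} : Finset ℕ) ∈ Kpoints → ({a8,a10} : Finset ℕ) ∈ Kpoints →
    ({a9,a10} : Finset ℕ) ∈ Kpoints →
    ({a2,a8} : Finset ℕ) ∈ Kpoints → ({a4,a7} : Finset ℕ) ∈ Kpoints →
    ({a1,a3,a5,a7} : Finset ℕ) ∈ Kpoints → ({a1,a4,a6,a8} : Finset ℕ) ∈ Kpoints →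
    ({a1,a10,11} : Finset ℕ) ∈ Kpoints → ({a2,a3,a6,a9} : Finset ℕ) ∈ Kpoints →
    ({a2,a4,a5,a10} : Finset ℕ) ∈ Kpoints → ({a2,a7,11} : Finset ℕ) ∈ Kpoints →
    ({a3,a8,11} : Finset ℕ) ∈ Kpoints → ({a4,a9,11} : Finset ℕ) ∈ Kpoints →
    ({a5,a8,a9} : Finset ℕ) ∈ Kpoints → ({a5,11} : Finset ℕ) ∈ Kpoints →
    ({a6,a7,a10} : Finset ℕ) ∈ Kpoints → ({a6,11} : Finset ℕ) ∈ Kpoints →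
    (([a1,a2,a3,a4,a5,a6,a7,a8,a9,a10] : List ℕ) = [1,2,3,4,5,6,7,8,9,10] ∨
     [a1,a2,a3,a4,a5,a6,a7,a8,a9,a10] = [3,4,2,1,6,5,9,7,10,8] ∨
     [a1,a2,a3,a4,a5,a6,a7,a8,a9,a10] = [2,1,4,3,5,6,10,9,8,7] ∨
     [a1,a2,a3,a4,a5,a6,a7,a8,a9,a10] = [4,3,1,2,6,5,8,10,7,9]) := by decide

/-- The automorphisms of `K` are exactly `1, σ, σ², σ³`; in particular the automorphism
group of `K` is cyclic of order 4, generated by `σ`. -/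
theorem stmt1 :
    (∀ φ : Equiv.Perm ℕ, IsAutoK φ ↔
      (φ = 1 ∨ φ = sigmaK ∨ φ = sigmaK ^ 2 ∨ φ = sigmaK ^ 3)) ∧
    orderOf sigmaK = 4 := by
  constructor
  · intro φ
    constructor
    · intro h
      have hmap : ∀ n ∈ Finset.Icc 1 11, φ n ∈ Finset.Icc 1 11 := by
        intro n hn
        by_contra hc
        have h2 := h.1 (φ n) hc
        have h3 := φ.injective h2
        rw [h3] at hc
        exact hc hn
      have h11 : φ 11 = 11 :=
        classK11 (φ 11) (hmap 11 (by decide)) ((auto_degk h 2 11).trans (by decide))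
          ((auto_degk h 3 11).trans (by decide))
      have m1 : φ 1 ∈ ([1,2,3,4,5,6] : List ℕ) :=
        classK16 (φ 1) (hmap 1 (by decide)) ((auto_degk h 2 1).trans (by decide)) ((auto_degk h 3 1).trans (by decide))
      have m2 : φ 2 ∈ ([1,2,3,4,5,6] : List ℕ) :=
        classK16 (φ 2) (hmap 2 (by decide)) ((auto_degk h 2 2).trans (by decide)) ((auto_degk h 3 2).trans (by decide))
      have m3 : φ 3 ∈ ([1,2,3,4,5,6] : List ℕ) :=
        classK16 (φ 3) (hmap 3 (by decide)) ((auto_degk h 2 3).trans (by decide)) ((auto_degk h 3 3).trans (by decide))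
      have m4 : φ 4 ∈ ([1,2,3,4,5,6] : List ℕ) :=
        classK16 (φ 4) (hmap 4 (by decide)) ((auto_degk h 2 4).trans (by decide)) ((auto_degk h 3 4).trans (by decide))
      have m5 : φ 5 ∈ ([1,2,3,4,5,6] : List ℕ) :=
        classK16 (φ 5) (hmap 5 (by decide)) ((auto_degk h 2 5).trans (by decide)) ((auto_degk h 3 5).trans (by decide))
      have m6 : φ 6 ∈ ([1,2,3,4,5,6] : List ℕ) :=
        classK16 (φ 6) (hmap 6 (by decide)) ((auto_degk h 2 6).trans (by decide)) ((auto_degk h 3 6).trans (by decide))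
      have m7 : φ 7 ∈ ([7,8,9,10] : List ℕ) :=
        classK710 (φ 7) (hmap 7 (by decide)) ((auto_degk h 2 7).trans (by decide))
      have m8 : φ 8 ∈ ([7,8,9,10] : List ℕ) :=
        classK710 (φ 8) (hmap 8 (by decide)) ((auto_degk h 2 8).trans (by decide))
      have m9 : φ 9 ∈ ([7,8,9,10] : List ℕ) :=
        classK710 (φ 9) (hmap 9 (by decide)) ((auto_degk h 2 9).trans (by decide))
      have m10 : φ 10 ∈ ([7,8,9,10] : List ℕ) :=
        classK710 (φ 10) (hmap 10 (by decide)) ((auto_degk h 2 10).trans (by decide))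
      have q12 : ({φ 1, φ 2} : Finset ℕ) ∈ Kpoints := by
        simpa [h11] using h.2 {1,2} (by decide)
      have q34 : ({φ 3, φ 4} : Finset ℕ) ∈ Kpoints := by
        simpa [h11] using h.2 {3,4} (by decide)
      have q56 : ({φ 5, φ 6} : Finset ℕ) ∈ Kpoints := by
        simpa [h11] using h.2 {5,6} (by decide)
      have q78 : ({φ 7, φ 8} : Finset ℕ) ∈ Kpoints := by
        simpa [h11] using h.2 {7,8} (by decide)
      have q79 : ({φ 7, φ 9} : Finset ℕ) ∈ Kpoints := by
        simpa [h11] using h.2 {7,9} (by decide)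
      have q19 : ({φ 1, φ 9} : Finset ℕ) ∈ Kpoints := by
        simpa [h11] using h.2 {1,9} (by decide)
      have q310 : ({φ 3, φ 10} : Finset ℕ) ∈ Kpoints := by
        simpa [h11] using h.2 {3,10} (by decide)
      have q810 : ({φ 8, φ 10} : Finset ℕ) ∈ Kpoints := by
        simpa [h11] using h.2 {8,10} (by decide)
      have q910 : ({φ 9, φ 10} : Finset ℕ) ∈ Kpoints := by
        simpa [h11] using h.2 {9,10} (by decide)
      have q28 : ({φ 2, φ 8} : Finset ℕ) ∈ Kpoints := by
        simpa [h11] using h.2 {2,8} (by decide)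
      have q47 : ({φ 4, φ 7} : Finset ℕ) ∈ Kpoints := by
        simpa [h11] using h.2 {4,7} (by decide)
      have q1357 : ({φ 1, φ 3, φ 5, φ 7} : Finset ℕ) ∈ Kpoints := by
        simpa [h11] using h.2 {1,3,5,7} (by decide)
      have q1468 : ({φ 1, φ 4, φ 6, φ 8} : Finset ℕ) ∈ Kpoints := by
        simpa [h11] using h.2 {1,4,6,8} (by decide)
      have q11011 : ({φ 1, φ 10, 11} : Finset ℕ) ∈ Kpoints := by
        simpa [h11] using h.2 {1,10,11} (by decide)
      have q2369 : ({φ 2, φ 3, φ 6, φ 9} : Finset ℕ) ∈ Kpoints := by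
        simpa [h11] using h.2 {2,3,6,9} (by decide)
      have q24510 : ({φ 2, φ 4, φ 5, φ 10} : Finset ℕ) ∈ Kpoints := by
        simpa [h11] using h.2 {2,4,5,10} (by decide)
      have q2711 : ({φ 2, φ 7, 11} : Finset ℕ) ∈ Kpoints := by
        simpa [h11] using h.2 {2,7,11} (by decide)
      have q3811 : ({φ 3, φ 8, 11} : Finset ℕ) ∈ Kpoints := by
        simpa [h11] using h.2 {3,8,11} (by decide)
      have q4911 : ({φ 4, φ 9, 11} : Finset ℕ) ∈ Kpoints := by
        simpa [h11] using h.2 {4,9,11} (by decide)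
      have q589 : ({φ 5, φ 8, φ 9} : Finset ℕ) ∈ Kpoints := by
        simpa [h11] using h.2 {5,8,9} (by decide)
      have q511 : ({φ 5, 11} : Finset ℕ) ∈ Kpoints := by
        simpa [h11] using h.2 {5,11} (by decide)
      have q6710 : ({φ 6, φ 7, φ 10} : Finset ℕ) ∈ Kpoints := by
        simpa [h11] using h.2 {6,7,10} (by decide)
      have q6110 : ({φ 6, 11} : Finset ℕ) ∈ Kpoints := by
        simpa [h11] using h.2 {6,11} (by decide)
      have hk := keyK (φ 1) m1 (φ 2) m2 q12 (φ 3) m3 (φ 4) m4 q34 (φ 5) m5 (φ 6) m6 q56 (φ 7) m7 (φ 8) m8 q78 (φ 9) m9 q79 q19 (φ 10) m10 q310 q810 q910 q28 q47 q1357 q1468 q11011 q2369 q24510 q2711 q3811 q4911 q589 q511 q6710 q6110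
      rcases hk with hl|hl|hl|hl
      · left
        obtain ⟨e1,e2,e3,e4,e5,e6,e7,e8,e9,e10⟩ : φ 1 = 1 ∧ φ 2 = 2 ∧ φ 3 = 3 ∧ φ 4 = 4 ∧ φ 5 = 5 ∧ φ 6 = 6 ∧ φ 7 = 7 ∧ φ 8 = 8 ∧ φ 9 = 9 ∧ φ 10 = 10 := by simpa using hl
        refine eq_of_vals h.1 (fun n _ => rfl) ?_
        intro n hn
        obtain ⟨hnl, hnr⟩ := Finset.mem_Icc.mp hn
        interval_cases n <;> simp only [e1,e2,e3,e4,e5,e6,e7,e8,e9,e10,h11] <;> decide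
      · right; left
        obtain ⟨e1,e2,e3,e4,e5,e6,e7,e8,e9,e10⟩ : φ 1 = 3 ∧ φ 2 = 4 ∧ φ 3 = 2 ∧ φ 4 = 1 ∧ φ 5 = 6 ∧ φ 6 = 5 ∧ φ 7 = 9 ∧ φ 8 = 7 ∧ φ 9 = 10 ∧ φ 10 = 8 := by simpa using hl
        refine eq_of_vals h.1 (sig_fix) ?_
        intro n hn
        obtain ⟨hnl, hnr⟩ := Finset.mem_Icc.mp hn
        interval_cases n <;> simp only [e1,e2,e3,e4,e5,e6,e7,e8,e9,e10,h11] <;> decide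
      · right; right; left
        obtain ⟨e1,e2,e3,e4,e5,e6,e7,e8,e9,e10⟩ : φ 1 = 2 ∧ φ 2 = 1 ∧ φ 3 = 4 ∧ φ 4 = 3 ∧ φ 5 = 5 ∧ φ 6 = 6 ∧ φ 7 = 10 ∧ φ 8 = 9 ∧ φ 9 = 8 ∧ φ 10 = 7 := by simpa using hl
        refine eq_of_vals h.1 (sigpow_fix 2) ?_
        intro n hn
        obtain ⟨hnl, hnr⟩ := Finset.mem_Icc.mp hn
        interval_cases n <;> simp only [e1,e2,e3,e4,e5,e6,e7,e8,e9,e10,h11] <;> decide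
      · right; right; right
        obtain ⟨e1,e2,e3,e4,e5,e6,e7,e8,e9,e10⟩ : φ 1 = 4 ∧ φ 2 = 3 ∧ φ 3 = 1 ∧ φ 4 = 2 ∧ φ 5 = 6 ∧ φ 6 = 5 ∧ φ 7 = 8 ∧ φ 8 = 10 ∧ φ 9 = 7 ∧ φ 10 = 9 := by simpa using hl
        refine eq_of_vals h.1 (sigpow_fix 3) ?_
        intro n hn
        obtain ⟨hnl, hnr⟩ := Finset.mem_Icc.mp hn
        interval_cases n <;> simp only [e1,e2,e3,e4,e5,e6,e7,e8,e9,e10,h11] <;> decide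
    · rintro (rfl|rfl|rfl|rfl)
      · exact ⟨fun n _ => rfl, by decide⟩
      · exact ⟨sig_fix, by decide⟩
      · exact ⟨sigpow_fix 2, by decide⟩
      · exact ⟨sigpow_fix 3, by decide⟩
  · refine (orderOf_eq_iff (by norm_num)).mpr ⟨?_, ?_⟩
    · refine eq_of_vals (sigpow_fix 4) (fun n _ => rfl) ?_
      intro n hn
      obtain ⟨hnl, hnr⟩ := Finset.mem_Icc.mp hn
      interval_cases n <;> (set_option maxRecDepth 10000 in decide)
    · intro m hm hpos hc
      have h1 : (sigmaK ^ m) 1 = 1 := by rw [hc]; rfl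
      interval_cases m <;> revert h1 <;> decide
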